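/- Let f be an (n,N,N) F-sequence with N < 2n−3. If f_{N,0} = f_{N,N}, then extending f by setting f_{N+1,0} = f_{N,N} − 1 yields an (n,N+1,0) F-sequence; otherwise, extending f by setting f_{N+1,0} to either max(0, f_{N,0} − 1) or f_{N,0} yields an (n,N+1,0) F-sequence. -/
import Mathlib


/-- The lower bound `L_f(i,j)` used in the F-sequence constraints. -/
def Lb (f : ℤ → ℤ → ℤ) (i j : ℤ) : ℤ :=
  max (f i (j - 1)) (max (f (i - 1) j - 1)
    (f i (j - 1) + f (i - 1) j - f (i - 1) (j - 1) - 1))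

/-- The upper bound `U_f(i,j)` used in the F-sequence constraints. -/
def Ub (f : ℤ → ℤ → ℤ) (i j : ℤ) : ℤ :=
  min (f (i - 1) j) (f i (j - 1) + f (i - 1) j - f (i - 1) (j - 1))

/-- The index domain of an `(n,N,M)` F-sequence:
`{(i,j) : 0 ≤ j ≤ i ≤ N-1} ∪ {(N,j) : 0 ≤ j ≤ M}`. -/
def ValidIdx (N M i j : ℤ) : Prop :=
  (0 ≤ j ∧ j ≤ i ∧ i ≤ N - 1) ∨ (i = N ∧ 0 ≤ j ∧ j ≤ M)

/-- An `(n,N,M)` **F**-sequence: a partially filled F-matrix, filled on the domain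
`{(i,j) : 0 ≤ j ≤ i ≤ N-1} ∪ {(N,j) : 0 ≤ j ≤ M}` (and zero elsewhere). -/
structure IsFSeq (n N M : ℕ) (f : ℤ → ℤ → ℤ) : Prop where
  hMN : M ≤ N
  hN2n : (N : ℤ) ≤ 2 * (n : ℤ) - 3
  zero_outside : ∀ i j : ℤ, ¬ ValidIdx (N : ℤ) (M : ℤ) i j → f i j = 0
  nonneg : ∀ i j : ℤ, 0 ≤ f i j
  diag_pos : ∀ i : ℤ, 0 ≤ i → i ≤ max ((N : ℤ) - 1) (M : ℤ) → 0 < f i i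
  diag_first : f 0 0 = 2
  diag_step : ∀ i : ℤ, 1 ≤ i → i ≤ max ((N : ℤ) - 1) (M : ℤ) →
      f i i = f (i - 1) (i - 1) + 1 ∨ f i i = f (i - 1) (i - 1) - 1
  diag_bound : ∀ i : ℤ, 0 ≤ i → i ≤ max ((N : ℤ) - 1) (M : ℤ) →
      f i i ≤ 2 * (n : ℤ) - i - 2
  bounds : ∀ i j : ℤ, ValidIdx (N : ℤ) (M : ℤ) i j → 0 ≤ j → j ≤ i - 2 →
      Lb f i j ≤ f i j ∧ f i j ≤ Ub f i j
  special : ∀ i j : ℤ, ValidIdx (N : ℤ) (M : ℤ) i j → 0 ≤ j → j ≤ i - 1 →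
      f (i - 1) j = f (i - 1) (i - 1) → f i j = f (i - 1) (i - 1) - 1

lemma fseq_extend_aux (n N : ℕ) (f : ℤ → ℤ → ℤ) (hf : IsFSeq n N N f)
    (hN : (N : ℤ) < 2 * (n : ℤ) - 3) (v : ℤ)
    (hv0 : 0 ≤ v) (hvL : f (N : ℤ) 0 - 1 ≤ v) (hvU : v ≤ f (N : ℤ) 0)
    (hvs : f (N : ℤ) 0 = f (N : ℤ) (N : ℤ) → v = f (N : ℤ) (N : ℤ) - 1) :
    IsFSeq n (N + 1) 0 (fun i j => if i = (N : ℤ) + 1 ∧ j = 0 then v else f i j) := by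
  obtain ⟨hMN, hN2n, hz, hnn, hdp, hd1, hds, hdb, hb, hsp⟩ := hf
  set g : ℤ → ℤ → ℤ := fun i j => if i = (N : ℤ) + 1 ∧ j = 0 then v else f i j with hgdef
  have hge : ∀ i j : ℤ, i ≠ (N : ℤ) + 1 → g i j = f i j := by
    intro i j h; simp only [hgdef]; exact if_neg (fun hc => h hc.1)
  have hge' : ∀ i j : ℤ, j ≠ 0 → g i j = f i j := by
    intro i j h; simp only [hgdef]; exact if_neg (fun hc => h hc.2)
  have hgv : g ((N : ℤ) + 1) 0 = v := by simp [hgdef]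
  constructor
  · omega
  · push_cast; omega
  · -- zero_outside
    intro i j h
    by_cases hij : i = (N : ℤ) + 1 ∧ j = 0
    · exfalso; apply h; right
      refine ⟨by push_cast; exact hij.1, by omega, by push_cast; omega⟩
    · rw [show g i j = f i j from if_neg hij]
      apply hz
      intro hv'
      apply h
      unfold ValidIdx at hv' ⊢
      push_cast at hv' ⊢
      omega
  · -- nonneg
    intro i j
    by_cases hij : i = (N : ℤ) + 1 ∧ j = 0
    · rw [show g i j = v from if_pos hij]; exact hv0
    · rw [show g i j = f i j from if_neg hij]; exact hnn i j
  · -- diag_pos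
    intro i h0 hub
    push_cast at hub
    have hiN : i ≤ (N : ℤ) := by omega
    rw [hge i i (by omega)]
    exact hdp i h0 (le_trans hiN (le_max_right _ _))
  · -- diag_first
    rw [hge 0 0 (by omega)]; exact hd1
  · -- diag_step
    intro i h1 hub
    push_cast at hub
    have hiN : i ≤ (N : ℤ) := by omega
    rw [hge i i (by omega), hge (i - 1) (i - 1) (by omega)]
    exact hds i h1 (le_trans hiN (le_max_right _ _))
  · -- diag_bound
    intro i h0 hub
    push_cast at hub
    have hiN : i ≤ (N : ℤ) := by omega
    rw [hge i i (by omega)]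
    exact hdb i h0 (le_trans hiN (le_max_right _ _))
  · -- bounds
    intro i j hvij h0j hj2
    by_cases hi : i = (N : ℤ) + 1
    · have hj : j = 0 := by unfold ValidIdx at hvij; push_cast at hvij; omega
      subst hi; subst hj
      have e1 : g ((N : ℤ) + 1) (0 - 1) = 0 := by
        rw [hge' _ _ (by omega)]
        apply hz; unfold ValidIdx; omega
      have hr : (N : ℤ) + 1 - 1 = (N : ℤ) := by ring
      have e2 : g ((N : ℤ) + 1 - 1) 0 = f (N : ℤ) 0 := by
        rw [hr]; exact hge _ _ (by omega)
      have e3 : g ((N : ℤ) + 1 - 1) (0 - 1) = 0 := by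
        rw [hr, hge' _ _ (by omega)]
        apply hz; unfold ValidIdx; omega
      unfold Lb Ub
      rw [e1, e2, e3, hgv]
      omega
    · have hiN : i ≤ (N : ℤ) := by unfold ValidIdx at hvij; push_cast at hvij; omega
      have hold : ValidIdx (N : ℤ) (N : ℤ) i j := by
        unfold ValidIdx at hvij ⊢; push_cast at hvij; omega
      unfold Lb Ub
      rw [hge i (j - 1) hi, hge (i - 1) j (by omega), hge (i - 1) (j - 1) (by omega),
        hge i j hi]
      exact hb i j hold h0j hj2
  · -- special
    intro i j hvij h0j hj1 heq
    by_cases hi : i = (N : ℤ) + 1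
    · have hj : j = 0 := by unfold ValidIdx at hvij; push_cast at hvij; omega
      subst hi; subst hj
      have hr : (N : ℤ) + 1 - 1 = (N : ℤ) := by ring
      rw [hr, hge _ _ (by omega), hge _ _ (by omega)] at heq
      rw [hr, hgv, hge _ _ (by omega)]
      exact hvs heq
    · have hiN : i ≤ (N : ℤ) := by unfold ValidIdx at hvij; push_cast at hvij; omega
      have hold : ValidIdx (N : ℤ) (N : ℤ) i j := by
        unfold ValidIdx at hvij ⊢; push_cast at hvij; omega
      rw [hge (i - 1) j (by omega), hge (i - 1) (i - 1) (by omega)] at heq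
      rw [hge i j hi, hge (i - 1) (i - 1) (by omega)]
      exact hsp i j hold h0j hj1 heq

/-- extending an `(n,N,N)` F-sequence (with `N < 2n-3`) at the first
entry `(N+1,0)` of a new row, by `f_{N,N} - 1` if `f_{N,0} = f_{N,N}` and otherwise by
either `max(0, f_{N,0} - 1)` or `f_{N,0}`, yields an `(n,N+1,0)` F-sequence. -/
theorem fseq_extend_new_row (n N : ℕ) (f : ℤ → ℤ → ℤ)
    (hf : IsFSeq n N N f) (hN : (N : ℤ) < 2 * (n : ℤ) - 3) :
    (f (N : ℤ) 0 = f (N : ℤ) (N : ℤ) →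
      IsFSeq n (N + 1) 0
        (fun i j => if i = (N : ℤ) + 1 ∧ j = 0 then
          f (N : ℤ) (N : ℤ) - 1 else f i j)) ∧
    (f (N : ℤ) 0 ≠ f (N : ℤ) (N : ℤ) →
      ∀ v : ℤ, (v = max 0 (f (N : ℤ) 0 - 1) ∨ v = f (N : ℤ) 0) →
        IsFSeq n (N + 1) 0
          (fun i j => if i = (N : ℤ) + 1 ∧ j = 0 then v else f i j)) := by
  have hN0 : 0 ≤ f (N : ℤ) 0 := hf.nonneg _ _
  have hNNpos : 0 < f (N : ℤ) (N : ℤ) :=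
    hf.diag_pos (N : ℤ) (by positivity) (le_max_right _ _)
  constructor
  · intro h
    exact fseq_extend_aux n N f hf hN _ (by omega) (by omega) (by omega) (fun _ => rfl)
  · intro h v hv
    rcases hv with hv | hv
    · exact fseq_extend_aux n N f hf hN v (by omega) (by omega) (by omega)
        (fun heq => absurd heq h)
    · exact fseq_extend_aux n N f hf hN v (by omega) (by omega) (by omega)
        (fun heq => absurd heq h)
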